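/- Let x = (x₁,…,xₙ) ∈ Φⁿ \ {0} have at least two nonzero entries, and let I be a closed arc in S¹ of minimal length containing all nonzero entries xₖ. Then 0 ∈ x₁ ⊞ ⋯ ⊞ xₙ if and only if the length of I is at least π. -/

import Mathlib

open Complex Set

noncomputable section

/-- The unit circle `S¹ ⊂ ℂ`. -/
def unitCircle : Set ℂ := Metric.sphere 0 1

/-- The tropical phase hyperfield `Φ = S¹ ∪ {0} ⊂ ℂ`. -/
def Phi : Set ℂ := unitCircle ∪ {0}

/-- The smallest closed arc of `S¹` joining two non-zero, non-antipodal unit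
complex numbers `x` and `y`: the set of phases of nonnegative combinations of `x,y`. -/
def smallArc (x y : ℂ) : Set ℂ :=
  {z : ℂ | ∃ a b : ℝ, 0 ≤ a ∧ 0 ≤ b ∧ 0 < a + b ∧
    z = ((a : ℂ) * x + (b : ℂ) * y) / ((‖(a : ℂ) * x + (b : ℂ) * y‖ : ℝ) : ℂ)}

/-- Hyperaddition in the tropical phase hyperfield. -/
def hadd (x y : ℂ) : Set ℂ :=
  if x = 0 then {y} else if y = 0 then {x} else if y = -x then Phi else smallArc x y

/-- Iterated hypersum `x₁ ⊞ ⋯ ⊞ xₙ` (unions over intermediate choices). -/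
def haddList : List ℂ → Set ℂ
  | [] => {0}
  | a :: l => ⋃ w ∈ haddList l, hadd a w

open scoped Classical

/-- The closed arc `{e^{iθ} : θ ∈ [a, a + L]}` of `S¹`, of length `L` starting at angle `a`. -/
def arcOf (a L : ℝ) : Set ℂ :=
  (fun θ : ℝ => Complex.exp ((θ : ℂ) * Complex.I)) '' Set.Icc a (a + L)

/-- The number of nonzero entries of `x`. -/
def suppCard {n : ℕ} (x : Fin n → ℂ) : ℕ :=
  (Finset.univ.filter (fun j => x j ≠ 0)).card

lemma mem_Phi_iff {z : ℂ} : z ∈ Phi ↔ z = 0 ∨ ‖z‖ = 1 := by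
  simp [Phi, unitCircle, Complex.dist_eq, or_comm]

lemma zero_mem_Phi : (0 : ℂ) ∈ Phi := mem_Phi_iff.2 (Or.inl rfl)

lemma abs_one_of_mem_Phi {z : ℂ} (h : z ∈ Phi) (h0 : z ≠ 0) : ‖z‖ = 1 :=
  (mem_Phi_iff.1 h).resolve_left h0

lemma neg_mem_Phi {z : ℂ} (h : z ∈ Phi) : -z ∈ Phi := by
  rcases mem_Phi_iff.1 h with h | h
  · simp [mem_Phi_iff, h]
  · exact mem_Phi_iff.2 (Or.inr (by simpa using h))

lemma div_abs_mem_Phi (s : ℂ) : s / ((‖s‖ : ℝ) : ℂ) ∈ Phi := by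
  rcases eq_or_ne s 0 with rfl | hs
  · simp [zero_mem_Phi]
  · refine mem_Phi_iff.2 (Or.inr ?_)
    rw [norm_div, Complex.norm_real, Real.norm_eq_abs, _root_.abs_of_nonneg (norm_nonneg s),
      div_self (norm_ne_zero_iff.mpr hs)]

lemma left_mem_smallArc {x : ℂ} (hx : ‖x‖ = 1) (y : ℂ) : x ∈ smallArc x y := by
  refine ⟨1, 0, zero_le_one, le_refl 0, by norm_num, ?_⟩
  simp [hx]

lemma right_mem_smallArc {y : ℂ} (x : ℂ) (hy : ‖y‖ = 1) : y ∈ smallArc x y := by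
  refine ⟨0, 1, le_refl 0, zero_le_one, by norm_num, ?_⟩
  simp [hy]

lemma smallArc_subset_Phi (x y : ℂ) : smallArc x y ⊆ Phi := by
  rintro z ⟨a, b, _, _, _, rfl⟩
  exact div_abs_mem_Phi _

lemma left_mem_hadd {x : ℂ} (hx : x ∈ Phi) (h0 : x ≠ 0) (y : ℂ) : x ∈ hadd x y := by
  unfold hadd
  rw [if_neg h0]
  by_cases hy : y = 0
  · simp [hy]
  · rw [if_neg hy]
    by_cases hyx : y = -x
    · rw [if_pos hyx]; exact hx
    · rw [if_neg hyx]; exact left_mem_smallArc (abs_one_of_mem_Phi hx h0) y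

lemma right_mem_hadd (x : ℂ) {y : ℂ} (hy : y ∈ Phi) (h0 : y ≠ 0) : y ∈ hadd x y := by
  unfold hadd
  by_cases hx : x = 0
  · simp [hx]
  · rw [if_neg hx, if_neg h0]
    by_cases hyx : y = -x
    · rw [if_pos hyx]; exact hy
    · rw [if_neg hyx]; exact right_mem_smallArc x (abs_one_of_mem_Phi hy h0)

lemma hadd_subset_Phi {x y : ℂ} (hx : x ∈ Phi) (hy : y ∈ Phi) : hadd x y ⊆ Phi := by
  unfold hadd
  split
  · simpa using hy
  · split
    · simpa using hx
    · split
      · exact subset_rfl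
      · exact smallArc_subset_Phi x y

lemma hadd_zero_left (y : ℂ) : hadd 0 y = {y} := by simp [hadd]

lemma hadd_zero_right {x : ℂ} (hx : x ≠ 0) : hadd x 0 = {x} := by
  simp [hadd, hx]

lemma hadd_neg_self {x : ℂ} (hx : x ≠ 0) : hadd x (-x) = Phi := by
  simp [hadd, hx]

lemma mem_haddList_cons {z a : ℂ} {l : List ℂ} :
    z ∈ haddList (a :: l) ↔ ∃ w ∈ haddList l, z ∈ hadd a w := by
  simp [haddList]

lemma haddList_subset_Phi : ∀ {l : List ℂ}, (∀ z ∈ l, z ∈ Phi) → haddList l ⊆ Phi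
  | [], _ => by simp [haddList, zero_mem_Phi]
  | a :: l, h => by
    have ht : ∀ z ∈ l, z ∈ Phi := fun z hz => h z (List.mem_cons_of_mem _ hz)
    intro z hz
    rcases mem_haddList_cons.1 hz with ⟨w, hw, hzw⟩
    exact hadd_subset_Phi (h a (List.mem_cons_self))
      (haddList_subset_Phi ht hw) hzw

lemma haddList_nonempty : ∀ {l : List ℂ}, (∀ z ∈ l, z ∈ Phi) → (haddList l).Nonempty
  | [], _ => ⟨0, by simp [haddList]⟩
  | a :: l, h => by
    have ht : ∀ z ∈ l, z ∈ Phi := fun z hz => h z (List.mem_cons_of_mem _ hz)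
    obtain ⟨w, hw⟩ := haddList_nonempty ht
    rcases eq_or_ne a 0 with rfl | ha
    · exact ⟨w, mem_haddList_cons.2 ⟨w, hw, by simp [hadd_zero_left]⟩⟩
    · exact ⟨a, mem_haddList_cons.2 ⟨w, hw, left_mem_hadd (h a (List.mem_cons_self)) ha w⟩⟩

lemma haddList_all_zero : ∀ {l : List ℂ}, (∀ z ∈ l, z = 0) → haddList l = {0}
  | [], _ => rfl
  | a :: l, h => by
    have ha : a = 0 := h a (List.mem_cons_self)
    have ht : haddList l = {0} := haddList_all_zero (fun z hz => h z (List.mem_cons_of_mem _ hz))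
    subst ha
    ext z
    simp [mem_haddList_cons, ht, hadd_zero_left]

lemma lemA : ∀ (l : List (ℝ × ℂ)), (∀ p ∈ l, 0 ≤ p.1 ∧ p.2 ∈ Phi) →
    ∀ s : ℂ, s = (l.map fun p => ((p.1 : ℂ) * p.2)).sum → s ≠ 0 →
    s / ((‖s‖ : ℝ) : ℂ) ∈ haddList (l.map Prod.snd)
  | [], _, s, hs, hs0 => by simp at hs; exact absurd hs hs0
  | p :: t, h, s, hs, hs0 => by
    have ht : ∀ q ∈ t, 0 ≤ q.1 ∧ q.2 ∈ Phi := fun q hq => h q (List.mem_cons_of_mem _ hq)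
    have htPhi : ∀ z ∈ t.map Prod.snd, z ∈ Phi := by
      intro z hz; rcases List.mem_map.1 hz with ⟨q, hq, rfl⟩; exact (ht q hq).2
    have hp := h p (List.mem_cons_self)
    set s' : ℂ := (t.map fun p => ((p.1 : ℂ) * p.2)).sum with hs'def
    have hsum : s = (p.1 : ℂ) * p.2 + s' := by simpa using hs
    rcases eq_or_ne p.2 0 with hp2 | hp2
    · -- head entry is zero
      have hss : s = s' := by simp [hsum, hp2]
      have hrec := lemA t ht s' rfl (by rw [← hss]; exact hs0)
      rw [List.map_cons, hp2]
      refine mem_haddList_cons.2 ⟨s' / ((‖s'‖ : ℝ) : ℂ), hrec, ?_⟩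
      rw [hadd_zero_left, hss]
      rfl
    · have habs2 : ‖p.2‖ = 1 := abs_one_of_mem_Phi hp.2 hp2
      rcases eq_or_ne s' 0 with hs'0 | hs'0
      · -- tail sum is zero: s = p.1 * p.2
        have hseq : s = (p.1 : ℂ) * p.2 := by rw [hsum, hs'0, add_zero]
        have hp1 : (0:ℝ) < p.1 := by
          rcases lt_or_eq_of_le hp.1 with h1 | h1
          · exact h1
          · exfalso; apply hs0; rw [hseq, ← h1]; simp
        have hval : s / ((‖s‖ : ℝ) : ℂ) = p.2 := by
          rw [hseq, norm_mul, Complex.norm_real, Real.norm_eq_abs, _root_.abs_of_pos hp1, habs2, mul_one]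
          rw [mul_comm, mul_div_assoc, div_self (by exact_mod_cast hp1.ne'), mul_one]
        obtain ⟨w, hw⟩ := haddList_nonempty htPhi
        rw [List.map_cons, hval]
        exact mem_haddList_cons.2 ⟨w, hw, left_mem_hadd hp.2 hp2 w⟩
      · -- tail sum nonzero
        have hw := lemA t ht s' rfl hs'0
        set w : ℂ := s' / ((‖s'‖ : ℝ) : ℂ) with hwdef
        have hwPhi : w ∈ Phi := div_abs_mem_Phi s'
        have habsw : ‖w‖ = 1 := by
          rw [hwdef, norm_div, Complex.norm_real, Real.norm_eq_abs,
            _root_.abs_of_pos (norm_pos_iff.mpr hs'0), div_self (norm_ne_zero_iff.mpr hs'0)]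
        have hw0 : w ≠ 0 := by intro h; rw [h] at habsw; simp at habsw
        have hws' : ((‖s'‖ : ℝ) : ℂ) * w = s' := by
          rw [hwdef, mul_div_cancel₀]
          exact_mod_cast (norm_pos_iff.mpr hs'0).ne'
        rcases eq_or_lt_of_le hp.1 with h1 | h1
        · -- p.1 = 0
          have hss : s = s' := by rw [hsum, ← h1]; simp
          rw [List.map_cons]
          refine mem_haddList_cons.2 ⟨w, hw, ?_⟩
          rw [hss, ← hwdef]
          exact right_mem_hadd p.2 hwPhi hw0
        · -- p.1 > 0
          rw [List.map_cons]
          refine mem_haddList_cons.2 ⟨w, hw, ?_⟩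
          by_cases hwa : w = -p.2
          · rw [hwa, hadd_neg_self hp2]
            exact div_abs_mem_Phi s
          · have : s / ((‖s‖ : ℝ) : ℂ) ∈ smallArc p.2 w := by
              refine ⟨p.1, ‖s'‖, le_of_lt h1, norm_nonneg s',
                by positivity, ?_⟩
              rw [hws', ← hsum]
            unfold hadd
            rw [if_neg hp2, if_neg hw0, if_neg hwa]
            exact this

lemma lemB : ∀ (l : List (ℝ × ℂ)), (∀ p ∈ l, 0 ≤ p.1 ∧ p.2 ∈ Phi) →
    (l.map fun p => ((p.1 : ℂ) * p.2)).sum = 0 → (∃ p ∈ l, 0 < p.1 ∧ p.2 ≠ 0) →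
    Phi ⊆ haddList (l.map Prod.snd)
  | [], _, _, hg => by simp at hg
  | p :: t, h, hsum, hg => by
    have ht : ∀ q ∈ t, 0 ≤ q.1 ∧ q.2 ∈ Phi := fun q hq => h q (List.mem_cons_of_mem _ hq)
    have hp := h p (List.mem_cons_self)
    set s' : ℂ := (t.map fun p => ((p.1 : ℂ) * p.2)).sum with hs'def
    have hsum' : (p.1 : ℂ) * p.2 + s' = 0 := by simpa using hsum
    by_cases hgood : 0 < p.1 ∧ p.2 ≠ 0
    · have hs'eq : s' = -((p.1 : ℂ) * p.2) := by linear_combination hsum'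
      have hs'0 : s' ≠ 0 := by
        rw [hs'eq]
        simp only [ne_eq, neg_eq_zero, mul_eq_zero, not_or]
        exact ⟨by exact_mod_cast hgood.1.ne', hgood.2⟩
      have hw := lemA t ht s' rfl hs'0
      have habs2 : ‖p.2‖ = 1 := abs_one_of_mem_Phi hp.2 hgood.2
      have habsval : (‖s'‖ : ℝ) = p.1 := by
        rw [hs'eq, norm_neg, norm_mul, Complex.norm_real, Real.norm_eq_abs,
          _root_.abs_of_pos hgood.1, habs2, mul_one]
      have hval : s' / ((‖s'‖ : ℝ) : ℂ) = -p.2 := by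
        rw [habsval, hs'eq, neg_div, mul_comm, mul_div_assoc,
          div_self (by exact_mod_cast hgood.1.ne' : (p.1 : ℂ) ≠ 0), mul_one]
      rw [hval] at hw
      intro z hz
      rw [List.map_cons]
      exact mem_haddList_cons.2 ⟨-p.2, hw, by rw [hadd_neg_self hgood.2]; exact hz⟩
    · have hz01 : (p.1 : ℂ) * p.2 = 0 := by
        rcases not_and_or.1 hgood with h1 | h2
        · have : p.1 = 0 := le_antisymm (not_lt.1 h1) hp.1
          simp [this]
        · simp [not_not.1 h2]
      have hs'0 : s' = 0 := by rw [hz01, zero_add] at hsum'; exact hsum'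
      have hg' : ∃ q ∈ t, 0 < q.1 ∧ q.2 ≠ 0 := by
        rcases hg with ⟨q, hq, hqg⟩
        rcases List.mem_cons.1 hq with rfl | hq'
        · exact absurd hqg hgood
        · exact ⟨q, hq', hqg⟩
      have IH := lemB t ht hs'0 hg'
      rcases eq_or_ne p.2 0 with h2 | h2
      · intro z hz
        rw [List.map_cons, h2]
        exact mem_haddList_cons.2 ⟨z, IH hz, by rw [hadd_zero_left]; rfl⟩
      · intro z hz
        have hnp : -p.2 ∈ Phi := neg_mem_Phi hp.2
        rw [List.map_cons]
        exact mem_haddList_cons.2 ⟨-p.2, IH hnp, by rw [hadd_neg_self h2]; exact hz⟩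

lemma smallArc_halfplane {u x y : ℂ} (hx : 0 < (x * (starRingEnd ℂ) u).re)
    (hy : 0 < (y * (starRingEnd ℂ) u).re) {z : ℂ} (hz : z ∈ smallArc x y) :
    0 < (z * (starRingEnd ℂ) u).re := by
  obtain ⟨a, b, ha, hb, hab, rfl⟩ := hz
  set v : ℂ := (a : ℂ) * x + (b : ℂ) * y with hv
  have hvre : 0 < (v * (starRingEnd ℂ) u).re := by
    have hexp : v * (starRingEnd ℂ) u
        = (a : ℂ) * (x * (starRingEnd ℂ) u) + (b : ℂ) * (y * (starRingEnd ℂ) u) := by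
      rw [hv]; ring
    rw [hexp, Complex.add_re, Complex.re_ofReal_mul, Complex.re_ofReal_mul]
    have hab' : 0 < a ∨ 0 < b := by
      by_contra hc
      push_neg at hc
      nlinarith [hc.1, hc.2]
    rcases hab' with h | h
    · nlinarith [mul_pos h hx, mul_nonneg hb hy.le]
    · nlinarith [mul_pos h hy, mul_nonneg ha hx.le]
  have hv0 : v ≠ 0 := by rintro h; rw [h] at hvre; simp at hvre
  have habs : (0:ℝ) < ‖v‖ := norm_pos_iff.mpr hv0
  rw [div_mul_eq_mul_div, Complex.div_ofReal_re]
  exact div_pos hvre habs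


lemma haddList_halfplane (u : ℂ) : ∀ (l : List ℂ), (∀ z ∈ l, z ∈ Phi) →
    (∀ z ∈ l, z ≠ 0 → 0 < (z * (starRingEnd ℂ) u).re) → (∃ z ∈ l, z ≠ 0) →
    ∀ z ∈ haddList l, 0 < (z * (starRingEnd ℂ) u).re
  | [], _, _, hg => by simp at hg
  | a :: t, h, hpos, hg => by
    have ht : ∀ z ∈ t, z ∈ Phi := fun z hz => h z (List.mem_cons_of_mem _ hz)
    have htpos : ∀ z ∈ t, z ≠ 0 → 0 < (z * (starRingEnd ℂ) u).re :=
      fun z hz => hpos z (List.mem_cons_of_mem _ hz)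
    intro z hz
    rcases mem_haddList_cons.1 hz with ⟨w, hw, hzw⟩
    by_cases hex : ∃ z ∈ t, z ≠ 0
    · have hwpos := haddList_halfplane u t ht htpos hex w hw
      have hw0 : w ≠ 0 := by rintro rfl; simp at hwpos
      rcases eq_or_ne a 0 with rfl | ha
      · rw [hadd_zero_left] at hzw
        rw [Set.mem_singleton_iff.1 hzw]
        exact hwpos
      · have hapos := hpos a (List.mem_cons_self) ha
        have hwa : w ≠ -a := by
          intro hwa
          rw [hwa] at hwpos
          have : (-a * (starRingEnd ℂ) u).re = -((a * (starRingEnd ℂ) u).re) := by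
            rw [neg_mul, Complex.neg_re]
          rw [this] at hwpos
          linarith
        unfold hadd at hzw
        rw [if_neg ha, if_neg hw0, if_neg hwa] at hzw
        exact smallArc_halfplane hapos hwpos hzw
    · push_neg at hex
      have hall : haddList t = {0} := haddList_all_zero (fun z hz => hex z hz)
      rw [hall] at hw
      rw [Set.mem_singleton_iff.1 hw] at hzw
      have ha : a ≠ 0 := by
        rcases hg with ⟨y, hy, hy0⟩
        rcases List.mem_cons.1 hy with rfl | hy'
        · exact hy0
        · exact absurd (hex y hy') hy0
      rw [hadd_zero_right ha] at hzw
      rw [Set.mem_singleton_iff.1 hzw]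
      exact hpos a (List.mem_cons_self) ha

lemma exp_mul_conj_exp (s t : ℝ) :
    Complex.exp ((s : ℂ) * Complex.I) * (starRingEnd ℂ) (Complex.exp ((t : ℂ) * Complex.I))
      = Complex.exp (((s - t : ℝ) : ℂ) * Complex.I) := by
  rw [← Complex.exp_conj, ← Complex.exp_add]
  congr 1
  rw [map_mul, Complex.conj_ofReal, Complex.conj_I]
  push_cast
  ring

lemma arc_halfplane {a L : ℝ} (hLpi : L < Real.pi) {z : ℂ} (hz : z ∈ arcOf a L) :
    0 < (z * (starRingEnd ℂ) (Complex.exp (((a + L / 2 : ℝ) : ℂ) * Complex.I))).re := by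
  obtain ⟨θ, hθ, rfl⟩ := hz
  rw [exp_mul_conj_exp, Complex.exp_ofReal_mul_I_re]
  apply Real.cos_pos_of_mem_Ioo
  constructor
  · have : θ ≥ a := hθ.1
    nlinarith [hθ.1, hθ.2]
  · nlinarith [hθ.1, hθ.2]

lemma exp_arg_add_arg {u z : ℂ} (hu : ‖u‖ = 1) (hz : ‖z‖ = 1) :
    Complex.exp (((Complex.arg u + Complex.arg (z * (starRingEnd ℂ) u) : ℝ) : ℂ) * Complex.I)
      = z := by
  have h1 : Complex.exp ((Complex.arg u : ℂ) * Complex.I) = u := by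
    have h := Complex.norm_mul_exp_arg_mul_I u
    rwa [hu, Complex.ofReal_one, one_mul] at h
  have habs : ‖z * (starRingEnd ℂ) u‖ = 1 := by
    rw [norm_mul, Complex.norm_conj, hu, hz, one_mul]
  have h2 : Complex.exp ((Complex.arg (z * (starRingEnd ℂ) u) : ℂ) * Complex.I)
      = z * (starRingEnd ℂ) u := by
    have h := Complex.norm_mul_exp_arg_mul_I (z * (starRingEnd ℂ) u)
    rwa [habs, Complex.ofReal_one, one_mul] at h
  rw [Complex.ofReal_add, add_mul, Complex.exp_add, h1, h2]
  calc u * (z * (starRingEnd ℂ) u) = z * (u * (starRingEnd ℂ) u) := by ring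
    _ = z * ((Complex.normSq u : ℝ) : ℂ) := by rw [Complex.mul_conj]
    _ = z := by rw [Complex.normSq_eq_norm_sq, hu]; norm_num


/-- Let `x ∈ Φⁿ \ {0}` have at least two nonzero entries and let
`I = arcOf a L` be a closed arc of `S¹` of minimal length `L ≥ 0` containing
all nonzero entries of `x`.  Then `0 ∈ x₁ ⊞ ⋯ ⊞ xₙ` iff `L ≥ π`. -/
theorem zero_mem_haddList_iff_arc_length (n : ℕ) (x : Fin n → ℂ)
    (hx : ∀ k, x k ∈ Phi) (hsupp : 2 ≤ suppCard x)
    (a L : ℝ) (hL : 0 ≤ L)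
    (hI : ∀ k, x k ≠ 0 → x k ∈ arcOf a L)
    (hmin : ∀ a' L' : ℝ, 0 ≤ L' → (∀ k, x k ≠ 0 → x k ∈ arcOf a' L') → L ≤ L') :
    (0 : ℂ) ∈ haddList (List.ofFn x) ↔ Real.pi ≤ L := by
  have hF : (Finset.univ.filter (fun j => x j ≠ 0)).Nonempty := by
    rw [← Finset.card_pos]
    have := hsupp
    unfold suppCard at this
    omega
  obtain ⟨k₀, hk₀⟩ := hF
  have hk₀0 : x k₀ ≠ 0 := (Finset.mem_filter.1 hk₀).2
  have hPhiL : ∀ z ∈ List.ofFn x, z ∈ Phi := by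
    intro z hz
    rcases Set.mem_range.1 ((List.mem_ofFn' x z).1 hz) with ⟨k, rfl⟩
    exact hx k
  constructor
  · intro h0
    by_contra hpi
    push_neg at hpi
    set u : ℂ := Complex.exp (((a + L / 2 : ℝ) : ℂ) * Complex.I) with hu
    have hpos : ∀ z ∈ List.ofFn x, z ≠ 0 → 0 < (z * (starRingEnd ℂ) u).re := by
      intro z hz hz0
      rcases Set.mem_range.1 ((List.mem_ofFn' x z).1 hz) with ⟨k, rfl⟩
      exact arc_halfplane hpi (hI k hz0)
    have hex : ∃ z ∈ List.ofFn x, z ≠ 0 :=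
      ⟨x k₀, (List.mem_ofFn' x (x k₀)).2 ⟨k₀, rfl⟩, hk₀0⟩
    have := haddList_halfplane u (List.ofFn x) hPhiL hpos hex 0 h0
    simp at this
  · intro hpiL
    by_cases hhull : (0 : ℂ) ∈ convexHull ℝ (x '' {k | x k ≠ 0})
    · -- extract convex combination and use lemB
      rw [convexHull_eq] at hhull
      obtain ⟨ι, t, w, zf, hw0, hw1, hzs, hcm⟩ := hhull
      have hgex : ∀ i : {i // i ∈ t}, ∃ k : Fin n, x k ≠ 0 ∧ x k = zf i.1 := by
        intro i
        rcases hzs i.1 i.2 with ⟨k, hk, hk2⟩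
        exact ⟨k, hk, hk2⟩
      choose g hg1 hg2 using hgex
      set c : Fin n → ℝ := fun k => ∑ i ∈ t.attach.filter (fun i => g i = k), w i.1 with hc
      have hc0 : ∀ k, 0 ≤ c k := by
        intro k
        apply Finset.sum_nonneg
        intro i hi
        exact hw0 i.1 i.2
      have hsum0 : ∑ k : Fin n, ((c k : ℂ) * x k) = 0 := by
        have hstep : ∀ k : Fin n, (c k : ℂ) * x k
            = ∑ i ∈ t.attach.filter (fun i => g i = k), ((w i.1 : ℂ) * x (g i)) := by
          intro k
          rw [hc]
          push_cast
          rw [Finset.sum_mul]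
          apply Finset.sum_congr rfl
          intro i hi
          rw [(Finset.mem_filter.1 hi).2]
        calc ∑ k : Fin n, ((c k : ℂ) * x k)
            = ∑ k : Fin n, ∑ i ∈ t.attach.filter (fun i => g i = k),
                ((w i.1 : ℂ) * x (g i)) := Finset.sum_congr rfl (fun k _ => hstep k)
          _ = ∑ i ∈ t.attach, ((w i.1 : ℂ) * x (g i)) :=
              Finset.sum_fiberwise_of_maps_to (fun i _ => Finset.mem_univ _) _
          _ = ∑ i ∈ t.attach, ((w i.1 : ℂ) * zf i.1) := by
              apply Finset.sum_congr rfl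
              intro i _
              rw [hg2 i]
          _ = ∑ i ∈ t, ((w i : ℂ) * zf i) := by
              rw [← Finset.sum_attach t (fun i => ((w i : ℂ) * zf i))]
          _ = ∑ i ∈ t, ((w i) • zf i) := by
              apply Finset.sum_congr rfl
              intro i _
              rw [Complex.real_smul]
          _ = t.centerMass w zf := by
              rw [Finset.centerMass, hw1]
              simp
          _ = 0 := hcm
      -- a good index
      obtain ⟨i₀, hi₀t, hi₀⟩ : ∃ i ∈ t, 0 < w i := by
        by_contra hcon
        push_neg at hcon
        have : ∑ i ∈ t, w i ≤ 0 := Finset.sum_nonpos hcon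
        rw [hw1] at this
        linarith
      set i₀' : {i // i ∈ t} := ⟨i₀, hi₀t⟩ with hi₀'
      have hck₀ : 0 < c (g i₀') := by
        rw [hc]
        have hmem : i₀' ∈ t.attach.filter (fun i => g i = g i₀') :=
          Finset.mem_filter.2 ⟨Finset.mem_attach _ _, rfl⟩
        calc (0:ℝ) < w i₀ := hi₀
          _ ≤ ∑ i ∈ t.attach.filter (fun i => g i = g i₀'), w i.1 :=
            Finset.single_le_sum (fun i _ => hw0 i.1 i.2) hmem
      -- apply lemB
      have hB := lemB (List.ofFn (fun k => (c k, x k)))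
        (by
          intro p hp
          rcases Set.mem_range.1 ((List.mem_ofFn' _ p).1 hp) with ⟨k, rfl⟩
          exact ⟨hc0 k, hx k⟩)
        (by
          rw [List.map_ofFn, List.sum_ofFn]
          exact hsum0)
        ⟨(c (g i₀'), x (g i₀')), (List.mem_ofFn' _ _).2 ⟨g i₀', rfl⟩, hck₀, hg1 i₀'⟩
      have hmap : (List.ofFn (fun k => (c k, x k))).map Prod.snd = List.ofFn x := by
        rw [List.map_ofFn]
        rfl
      rw [hmap] at hB
      exact hB zero_mem_Phi
    · -- separation: contradiction with minimality
      exfalso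
      have hKfin : (x '' {k | x k ≠ 0}).Finite := Set.Finite.image x (Set.toFinite _)
      obtain ⟨f, r, hfr, hfb⟩ := geometric_hahn_banach_point_closed
        (convex_convexHull ℝ _) (hKfin.isClosed_convexHull (𝕜 := ℝ)) hhull
      rw [map_zero] at hfr
      have hfpos : ∀ k, x k ≠ 0 → 0 < f (x k) := by
        intro k hk
        have : x k ∈ convexHull ℝ (x '' {k | x k ≠ 0}) :=
          subset_convexHull ℝ _ ⟨k, hk, rfl⟩
        linarith [hfb _ this]
      set v : ℂ := ⟨f 1, f Complex.I⟩ with hv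
      have hfv : ∀ z : ℂ, f z = (z * (starRingEnd ℂ) v).re := by
        intro z
        have hzdec : z = z.re • (1 : ℂ) + z.im • Complex.I := by
          simp only [Complex.real_smul, mul_one]
          exact (Complex.re_add_im z).symm
        rw [Complex.mul_re, Complex.conj_re, Complex.conj_im]
        have : f z = z.re * f 1 + z.im * f Complex.I := by
          conv_lhs => rw [hzdec]
          rw [map_add, map_smul, map_smul, smul_eq_mul, smul_eq_mul]
        rw [this, hv]
        simp
      have hv0 : v ≠ 0 := by
        intro h
        have := hfpos k₀ hk₀0
        rw [hfv, h] at this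
        simp at this
      set u : ℂ := v / ((‖v‖ : ℝ) : ℂ) with hu
      have habsu : ‖u‖ = 1 := by
        rw [hu, norm_div, Complex.norm_real, Real.norm_eq_abs,
          _root_.abs_of_pos (norm_pos_iff.mpr hv0), div_self (norm_ne_zero_iff.mpr hv0)]
      have hupos : ∀ k, x k ≠ 0 → 0 < (x k * (starRingEnd ℂ) u).re := by
        intro k hk
        rw [hu, map_div₀, Complex.conj_ofReal, ← mul_div_assoc, Complex.div_ofReal_re]
        exact div_pos (by rw [← hfv]; exact hfpos k hk) (norm_pos_iff.mpr hv0)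
      -- angles
      set T : Fin n → ℝ := fun k => Complex.arg u + Complex.arg (x k * (starRingEnd ℂ) u)
        with hT
      have hTexp : ∀ k, x k ≠ 0 → Complex.exp ((T k : ℂ) * Complex.I) = x k := by
        intro k hk
        exact exp_arg_add_arg habsu (abs_one_of_mem_Phi (hx k) hk)
      have hTbound : ∀ k, x k ≠ 0 → |Complex.arg (x k * (starRingEnd ℂ) u)| < Real.pi / 2 := by
        intro k hk
        exact Complex.abs_arg_lt_pi_div_two_iff.2 (Or.inl (hupos k hk))
      set F : Finset (Fin n) := Finset.univ.filter (fun j => x j ≠ 0) with hFdef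
      have hFne : F.Nonempty := ⟨k₀, hk₀⟩
      set m : ℝ := F.inf' hFne T with hm
      set M : ℝ := F.sup' hFne T with hM
      have hmM : m ≤ M := le_trans (Finset.inf'_le T hk₀) (Finset.le_sup' T hk₀)
      have harc : ∀ k, x k ≠ 0 → x k ∈ arcOf m (M - m) := by
        intro k hk
        have hkF : k ∈ F := Finset.mem_filter.2 ⟨Finset.mem_univ _, hk⟩
        refine ⟨T k, ⟨Finset.inf'_le T hkF, ?_⟩, hTexp k hk⟩
        rw [add_sub_cancel]
        exact Finset.le_sup' T hkF
      have hLle : L ≤ M - m := hmin m (M - m) (by linarith) harc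
      obtain ⟨k₁, hk₁F, hk₁⟩ := Finset.exists_mem_eq_sup' hFne T
      obtain ⟨k₂, hk₂F, hk₂⟩ := Finset.exists_mem_eq_inf' hFne T
      have hb₁ := hTbound k₁ (Finset.mem_filter.1 hk₁F).2
      have hb₂ := hTbound k₂ (Finset.mem_filter.1 hk₂F).2
      rw [abs_lt] at hb₁ hb₂
      have : M - m < Real.pi := by
        have h1 : M = Complex.arg u + Complex.arg (x k₁ * (starRingEnd ℂ) u) := hk₁
        have h2 : m = Complex.arg u + Complex.arg (x k₂ * (starRingEnd ℂ) u) := hk₂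
        rw [h1, h2]
        have := Real.pi_pos
        linarith [hb₁.2, hb₂.1]
      linarith
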